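/- Let G be a finite simple graph on at least 3 vertices, let v and u be distinct vertices of G, and set S = V(G)∖{v,u}. Suppose S is an anchor of G and that every automorphism α of the induced subgraph G[S] satisfies α(N_G(v) ∩ S) = N_G(v) ∩ S. Then G is reconstructible. -/

import Mathlib

/-- An *anchor* of `G` is a proper subset `S ⊊ V(G)` such that the induced
subgraph `G[S]` occurs exactly once in `G`: every `T` with `G[T] ≅ G[S]`
satisfies `T = S`. -/
def IsAnchor {V : Type} (G : SimpleGraph V) (S : Set V) : Prop :=
  S ≠ Set.univ ∧ ∀ T : Set V, Nonempty (G.induce T ≃g G.induce S) → T = S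

/-- Two graphs are *hypomorphic* if there is a bijection `σ` between their
vertex sets such that `G − v ≅ G′ − σ(v)` for every vertex `v`. -/
def Hypomorphic {V W : Type} [Fintype V] [Fintype W]
    (G : SimpleGraph V) (G' : SimpleGraph W) : Prop :=
  ∃ σ : V ≃ W, ∀ v : V,
    Nonempty (G.induce ({v}ᶜ : Set V) ≃g G'.induce ({σ v}ᶜ : Set W))

/-- A graph is *reconstructible* if every graph hypomorphic to it is
isomorphic to it. -/
def Reconstructible {V : Type} [Fintype V] (G : SimpleGraph V) : Prop :=
  ∀ (W : Type) [Fintype W] (G' : SimpleGraph W), Hypomorphic G G' → Nonempty (G ≃g G')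

open Classical

section AnchorHelpers

variable {V W : Type}

noncomputable def restrictIso {G : SimpleGraph V} {G' : SimpleGraph W} {A : Set V} {B : Set W}
    (e : G.induce A ≃g G'.induce B) (T : Set V) (hT : T ⊆ A) :
    G.induce T ≃g G'.induce (Set.range fun x : T => ((e ⟨x.1, hT x.2⟩ : ↥B) : W)) where
  toEquiv := Equiv.ofBijective (fun x => ⟨((e ⟨x.1, hT x.2⟩ : ↥B) : W), ⟨x, rfl⟩⟩) (by
    constructor
    · intro x y h
      have h1 : ((e ⟨x.1, hT x.2⟩ : ↥B) : W) = ((e ⟨y.1, hT y.2⟩ : ↥B) : W) := by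
        simpa using congrArg Subtype.val h
      have h2 := e.toEquiv.injective (Subtype.ext h1)
      have h3 : x.1 = y.1 := by simpa using congrArg Subtype.val h2
      exact Subtype.ext h3
    · rintro ⟨w, x, rfl⟩; exact ⟨x, rfl⟩)
  map_rel_iff' := by
    intro x y
    simp only [Equiv.ofBijective_apply, SimpleGraph.comap_adj, Function.Embedding.coe_subtype]
    have := e.map_rel_iff (a := ⟨x.1, hT x.2⟩) (b := ⟨y.1, hT y.2⟩)
    exact this

noncomputable def induceCongr {G : SimpleGraph V} {A B : Set V} (h : A = B) :
    G.induce A ≃g G.induce B where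
  toEquiv := Equiv.setCongr h
  map_rel_iff' := by intro x y; subst h; rfl

lemma card_edge_induce_compl (G : SimpleGraph V) [Fintype V] (v : V) :
    (G.induce ({v}ᶜ : Set V)).edgeFinset.card + G.degree v = G.edgeFinset.card := by
  classical
  have h1 : (G.edgeFinset.filter (fun e => v ∈ e)).card
      + (G.edgeFinset.filter (fun e => ¬ v ∈ e)).card = G.edgeFinset.card :=
    Finset.card_filter_add_card_filter_not (p := fun e => v ∈ e)
  have h2 : (G.edgeFinset.filter (fun e => v ∈ e)) = G.incidenceFinset v := by
    rw [G.incidenceFinset_eq_filter v]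
  have h3 : (G.induce ({v}ᶜ : Set V)).edgeFinset.card
      = (G.edgeFinset.filter (fun e => ¬ v ∈ e)).card := by
    apply Finset.card_bij (fun e _ => Sym2.map Subtype.val e)
    · intro e he
      induction e using Sym2.ind with
      | _ a b =>
        rw [SimpleGraph.mem_edgeFinset, SimpleGraph.mem_edgeSet] at he
        rw [Sym2.map_pair_eq, Finset.mem_filter, SimpleGraph.mem_edgeFinset,
          SimpleGraph.mem_edgeSet]
        refine ⟨he, ?_⟩
        rw [Sym2.mem_iff]
        push_neg
        exact ⟨fun h => a.2 h.symm, fun h => b.2 h.symm⟩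
    · intro e1 _ e2 _ h
      exact Sym2.map.injective Subtype.val_injective h
    · intro e he
      rw [Finset.mem_filter] at he
      obtain ⟨he1, he2⟩ := he
      induction e using Sym2.ind with
      | _ a b =>
        rw [SimpleGraph.mem_edgeFinset, SimpleGraph.mem_edgeSet] at he1
        rw [Sym2.mem_iff] at he2
        push_neg at he2
        refine ⟨s(⟨a, fun h => he2.1 (by simpa using h.symm)⟩,
          ⟨b, fun h => he2.2 (by simpa using h.symm)⟩), ?_, ?_⟩
        · rw [SimpleGraph.mem_edgeFinset, SimpleGraph.mem_edgeSet]
          exact he1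
        · rw [Sym2.map_pair_eq]
  have h4 := G.card_incidenceFinset_eq_degree v
  rw [h2] at h1
  omega

lemma kelly_sum (G : SimpleGraph V) [Fintype V] :
    (∑ x : V, (G.induce ({x}ᶜ : Set V)).edgeFinset.card) + 2 * G.edgeFinset.card
      = Fintype.card V * G.edgeFinset.card := by
  classical
  rw [← G.sum_degrees_eq_twice_card_edges, ← Finset.sum_add_distrib,
    Finset.sum_congr rfl (fun x _ => card_edge_induce_compl G x)]
  simp [Finset.card_univ]

end AnchorHelpers

/-- If `S = V(G)∖{v,u}` is an anchor of `G` and every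
automorphism of `G[S]` fixes `N_G(v) ∩ S` setwise, then `G` is
reconstructible. -/
theorem stmt_4 {V : Type} [Fintype V] (G : SimpleGraph V)
    (hcard : 3 ≤ Fintype.card V)
    (v u : V) (hvu : v ≠ u)
    (S : Set V) (hS : S = ({v, u} : Set V)ᶜ)
    (hanch : IsAnchor G S)
    (hfix : ∀ α : G.induce S ≃g G.induce S, ∀ x : ↥S,
      G.Adj v (x : V) ↔ G.Adj v ((α x : V))) :
    Reconstructible G := by
  classical
  intro W _ G' hyp
  obtain ⟨σ, hσ⟩ := hyp
  have hvS : v ∉ S := by rw [hS]; simp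
  have huS : u ∉ S := by rw [hS]; simp
  have hSsubU : S ⊆ ({u}ᶜ : Set V) := by
    rw [hS]; intro x hx
    simp only [Set.mem_compl_iff, Set.mem_insert_iff, Set.mem_singleton_iff] at hx
    push_neg at hx
    simpa using hx.2
  have hSsubV : S ⊆ ({v}ᶜ : Set V) := by
    rw [hS]; intro x hx
    simp only [Set.mem_compl_iff, Set.mem_insert_iff, Set.mem_singleton_iff] at hx
    push_neg at hx
    simpa using hx.1
  have hcardVW : Fintype.card V = Fintype.card W := Fintype.card_congr σ
  set S' : Set W := ({σ v, σ u} : Set W)ᶜ with hS'def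
  have hσvu : σ v ≠ σ u := fun h => hvu (σ.injective h)
  have hSn : S.ncard = Fintype.card V - 2 := by
    have h1 : S.ncard + Sᶜ.ncard = Nat.card V := Set.ncard_add_ncard_compl S
    rw [hS, compl_compl, Set.ncard_pair hvu, Nat.card_eq_fintype_card] at h1
    rw [hS]
    omega
  -- Key: any copy of G[S] in G' is exactly S'
  have keyT : ∀ T : Set W, (G'.induce T ≃g G.induce S) → T = S' := by
    intro T h
    have hTcard : T.ncard = S.ncard := by
      rw [← Nat.card_coe_set_eq, ← Nat.card_coe_set_eq]
      exact Nat.card_congr h.toEquiv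
    have hcompl : Tᶜ ⊆ ({σ v, σ u} : Set W) := by
      by_contra hc
      rw [Set.not_subset] at hc
      obtain ⟨x, hxT, hxvu⟩ := hc
      simp only [Set.mem_insert_iff, Set.mem_singleton_iff] at hxvu
      push_neg at hxvu
      set y := σ.symm x with hy
      have hσy : σ y = x := σ.apply_symm_apply x
      have hyS : y ∈ S := by
        rw [hS]
        simp only [Set.mem_compl_iff, Set.mem_insert_iff, Set.mem_singleton_iff]
        push_neg
        constructor
        · intro hyv; exact hxvu.1 (by rw [← hσy, hyv])
        · intro hyu; exact hxvu.2 (by rw [← hσy, hyu])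
      have χ : G.induce ({y}ᶜ : Set V) ≃g G'.induce ({x}ᶜ : Set W) :=
        (hσ y).some.trans (induceCongr (by rw [hσy]))
      have hTsub : T ⊆ ({x}ᶜ : Set W) := by
        intro z hz
        simp only [Set.mem_compl_iff, Set.mem_singleton_iff]
        rintro rfl
        exact hxT hz
      have ρ := restrictIso χ.symm T hTsub
      have hR := hanch.2 _ ⟨ρ.symm.trans h⟩
      have hyR : y ∉ Set.range fun t : T => ((χ.symm ⟨t.1, hTsub t.2⟩ : _) : V) := by
        rintro ⟨t, ht⟩
        have hmem := (χ.symm ⟨t.1, hTsub t.2⟩).2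
        have ht' : ((χ.symm ⟨t.1, hTsub t.2⟩ : _) : V) = y := ht
        rw [ht'] at hmem
        simp at hmem
      rw [hR] at hyR
      exact hyR hyS
    have h1 : T.ncard + Tᶜ.ncard = Nat.card W := Set.ncard_add_ncard_compl T
    rw [Nat.card_eq_fintype_card] at h1
    have hTc : Tᶜ.ncard = 2 := by omega
    have h2 : Tᶜ = ({σ v, σ u} : Set W) :=
      Set.eq_of_subset_of_ncard_le hcompl
        (by rw [hTc, Set.ncard_pair hσvu]) (Set.toFinite _)
    have h3 := congrArg compl h2
    rwa [compl_compl] at h3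
  -- the two vertex-deleted isomorphisms
  have φ := (hσ u).some
  have ψ := (hσ v).some
  have hvmemU : v ∈ ({u}ᶜ : Set V) := by simpa using hvu
  have humemV : u ∈ ({v}ᶜ : Set V) := by simpa using (Ne.symm hvu)
  -- restricted isomorphisms onto S'
  have hRφ : (Set.range fun x : S => ((φ ⟨x.1, hSsubU x.2⟩ : _) : W)) = S' :=
    keyT _ (restrictIso φ S hSsubU).symm
  have hRψ : (Set.range fun x : S => ((ψ ⟨x.1, hSsubV x.2⟩ : _) : W)) = S' :=
    keyT _ (restrictIso ψ S hSsubV).symm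
  let eφ : G.induce S ≃g G'.induce S' := (restrictIso φ S hSsubU).trans (induceCongr hRφ)
  let eψ : G.induce S ≃g G'.induce S' := (restrictIso ψ S hSsubV).trans (induceCongr hRψ)
  have heφval : ∀ t : ↥S, ((eφ t : _) : W) = ((φ ⟨t.1, hSsubU t.2⟩ : _) : W) := fun t => rfl
  have heψval : ∀ t : ↥S, ((eψ t : _) : W) = ((ψ ⟨t.1, hSsubV t.2⟩ : _) : W) := fun t => rfl
  -- φ sends v to σ v
  have hφv : ∀ h : v ∈ ({u}ᶜ : Set V), ((φ ⟨v, h⟩ : _) : W) = σ v := by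
    intro hm
    by_contra hne
    have h1 : ((φ ⟨v, hm⟩ : _) : W) ∈ S' := by
      have h2 := (φ ⟨v, hm⟩).2
      simp only [Set.mem_compl_iff, Set.mem_singleton_iff] at h2
      simp only [hS'def, Set.mem_compl_iff, Set.mem_insert_iff, Set.mem_singleton_iff]
      push_neg
      exact ⟨hne, h2⟩
    rw [← hRφ] at h1
    obtain ⟨t, ht⟩ := h1
    have h2 : (⟨t.1, hSsubU t.2⟩ : ↥({u}ᶜ : Set V)) = ⟨v, hm⟩ :=
      φ.toEquiv.injective (Subtype.ext ht)
    have h3 : t.1 = v := by simpa using congrArg Subtype.val h2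
    exact hvS (h3 ▸ t.2)
  -- ψ sends u to σ u
  have hψu : ∀ h : u ∈ ({v}ᶜ : Set V), ((ψ ⟨u, h⟩ : _) : W) = σ u := by
    intro hm
    by_contra hne
    have h1 : ((ψ ⟨u, hm⟩ : _) : W) ∈ S' := by
      have h2 := (ψ ⟨u, hm⟩).2
      simp only [Set.mem_compl_iff, Set.mem_singleton_iff] at h2
      simp only [hS'def, Set.mem_compl_iff, Set.mem_insert_iff, Set.mem_singleton_iff]
      push_neg
      exact ⟨h2, hne⟩
    rw [← hRψ] at h1
    obtain ⟨t, ht⟩ := h1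
    have h2 : (⟨t.1, hSsubV t.2⟩ : ↥({v}ᶜ : Set V)) = ⟨u, hm⟩ :=
      ψ.toEquiv.injective (Subtype.ext ht)
    have h3 : t.1 = u := by simpa using congrArg Subtype.val h2
    exact huS (h3 ▸ t.2)
  -- adjacency transfer through φ
  have hadjφ : ∀ t : ↥S, G'.Adj (σ v) ((eφ t : _) : W) ↔ G.Adj v t.1 := by
    intro t
    rw [← hφv hvmemU, heφval t]
    have := φ.map_rel_iff (a := ⟨v, hvmemU⟩) (b := ⟨t.1, hSsubU t.2⟩)
    simpa using this
  -- adjacency transfer through ψ, using the automorphism hypothesis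
  have hadjψ : ∀ t : ↥S, G'.Adj (σ v) ((eψ t : _) : W) ↔ G.Adj v t.1 := by
    intro t
    have hαval : eφ ((eψ.trans eφ.symm) t) = eψ t := eφ.apply_symm_apply (eψ t)
    rw [← hαval, hadjφ]
    exact (hfix (eψ.trans eφ.symm) t).symm
  -- edge counts agree
  have hEc : G.edgeFinset.card = G'.edgeFinset.card := by
    have hsum : (∑ x : V, (G.induce ({x}ᶜ : Set V)).edgeFinset.card)
        = ∑ w : W, (G'.induce ({w}ᶜ : Set W)).edgeFinset.card := by
      rw [← Equiv.sum_comp σ (fun w => (G'.induce ({w}ᶜ : Set W)).edgeFinset.card)]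
      exact Finset.sum_congr rfl fun x _ => ((hσ x).some).card_edgeFinset_eq
    have h1 := kelly_sum G
    have h2 := kelly_sum G'
    rw [← hsum, ← hcardVW] at h2
    set n := Fintype.card V with hn
    set s := ∑ x : V, (G.induce ({x}ᶜ : Set V)).edgeFinset.card with hs
    have h3 : s = (n - 2) * G.edgeFinset.card := by
      have h4 : (n - 2) * G.edgeFinset.card + 2 * G.edgeFinset.card = n * G.edgeFinset.card := by
        rw [← Nat.add_mul, Nat.sub_add_cancel (by omega)]
      linarith
    have h5 : s = (n - 2) * G'.edgeFinset.card := by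
      have h4 : (n - 2) * G'.edgeFinset.card + 2 * G'.edgeFinset.card
          = n * G'.edgeFinset.card := by
        rw [← Nat.add_mul, Nat.sub_add_cancel (by omega)]
      linarith
    exact Nat.eq_of_mul_eq_mul_left (show 0 < n - 2 by omega) (by rw [← h3, h5])
  -- degrees of v and σ v agree
  have hdegv : G.degree v = G'.degree (σ v) := by
    have h1 := card_edge_induce_compl G v
    have h2 := card_edge_induce_compl G' (σ v)
    have h3 : (G.induce ({v}ᶜ : Set V)).edgeFinset.card
        = (G'.induce ({σ v}ᶜ : Set W)).edgeFinset.card := ψ.card_edgeFinset_eq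
    omega
  -- neighbor counting
  let g : V → W := fun x => if h : x ∈ S then ((eψ ⟨x, h⟩ : _) : W) else σ x
  have himg : g '' (G.neighborSet v ∩ S) = G'.neighborSet (σ v) ∩ S' := by
    ext w
    constructor
    · rintro ⟨x, ⟨hxN, hxS⟩, rfl⟩
      simp only [g, dif_pos hxS]
      exact ⟨(hadjψ ⟨x, hxS⟩).2 hxN, (eψ ⟨x, hxS⟩).2⟩
    · rintro ⟨hwN, hwS'⟩
      set t := eψ.symm ⟨w, hwS'⟩ with htdef
      have hval : ((eψ t : _) : W) = w := by
        rw [htdef, eψ.apply_symm_apply]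
      refine ⟨t.1, ⟨?_, t.2⟩, ?_⟩
      · exact (hadjψ t).1 (by rwa [hval])
      · simp only [g, dif_pos t.2]
        exact hval
  have hinj : Set.InjOn g (G.neighborSet v ∩ S) := by
    intro a ha b hb hab
    simp only [g, dif_pos ha.2, dif_pos hb.2] at hab
    have := eψ.toEquiv.injective (Subtype.ext hab)
    simpa using congrArg Subtype.val this
  have hcount : (G.neighborSet v ∩ S).ncard = (G'.neighborSet (σ v) ∩ S').ncard := by
    rw [← himg, Set.ncard_image_of_injOn hinj]
  -- decompose neighborhoods
  have hdv : (G.neighborSet v).ncard = G.degree v := by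
    rw [← Nat.card_coe_set_eq, Nat.card_eq_fintype_card]
    exact G.card_neighborSet_eq_degree v
  have hdv' : (G'.neighborSet (σ v)).ncard = G'.degree (σ v) := by
    rw [← Nat.card_coe_set_eq, Nat.card_eq_fintype_card]
    exact G'.card_neighborSet_eq_degree (σ v)
  have hsplit : (G.neighborSet v).ncard
      = (G.neighborSet v ∩ S).ncard + (G.neighborSet v ∩ {u}).ncard := by
    rw [← Set.ncard_union_eq (by
        rw [Set.disjoint_left]
        rintro x ⟨_, hxS⟩ ⟨_, hxu⟩
        rw [Set.mem_singleton_iff] at hxu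
        exact huS (hxu ▸ hxS)) (Set.toFinite _) (Set.toFinite _)]
    congr 1
    ext x
    simp only [Set.mem_union, Set.mem_inter_iff, Set.mem_singleton_iff,
      SimpleGraph.mem_neighborSet]
    constructor
    · intro hx
      by_cases hxu : x = u
      · exact Or.inr ⟨hx, hxu⟩
      · refine Or.inl ⟨hx, ?_⟩
        rw [hS]
        simp only [Set.mem_compl_iff, Set.mem_insert_iff, Set.mem_singleton_iff]
        push_neg
        exact ⟨fun h => G.irrefl (h ▸ hx), hxu⟩
    · tauto
  have hsplit' : (G'.neighborSet (σ v)).ncard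
      = (G'.neighborSet (σ v) ∩ S').ncard + (G'.neighborSet (σ v) ∩ {σ u}).ncard := by
    rw [← Set.ncard_union_eq (by
        rw [Set.disjoint_left]
        rintro x ⟨_, hxS⟩ ⟨_, hxu⟩
        rw [Set.mem_singleton_iff] at hxu
        simp only [hS'def, Set.mem_compl_iff, Set.mem_insert_iff,
          Set.mem_singleton_iff] at hxS
        exact hxS (Or.inr hxu)) (Set.toFinite _) (Set.toFinite _)]
    congr 1
    ext x
    simp only [Set.mem_union, Set.mem_inter_iff, Set.mem_singleton_iff,
      SimpleGraph.mem_neighborSet]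
    constructor
    · intro hx
      by_cases hxu : x = σ u
      · exact Or.inr ⟨hx, hxu⟩
      · refine Or.inl ⟨hx, ?_⟩
        simp only [hS'def, Set.mem_compl_iff, Set.mem_insert_iff, Set.mem_singleton_iff]
        push_neg
        exact ⟨fun h => G'.irrefl (h ▸ hx), hxu⟩
    · tauto
  -- the crucial edge v-u
  have hvuedge : G.Adj v u ↔ G'.Adj (σ v) (σ u) := by
    have hU : (G.neighborSet v ∩ {u}).ncard = if G.Adj v u then 1 else 0 := by
      by_cases h : G.Adj v u
      · rw [if_pos h]
        have : G.neighborSet v ∩ {u} = {u} := by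
          ext x
          simp only [Set.mem_inter_iff, Set.mem_singleton_iff, SimpleGraph.mem_neighborSet]
          exact ⟨fun hx => hx.2, fun hx => ⟨hx ▸ h, hx⟩⟩
        rw [this, Set.ncard_singleton]
      · rw [if_neg h]
        have : G.neighborSet v ∩ {u} = ∅ := by
          ext x
          simp only [Set.mem_inter_iff, Set.mem_singleton_iff, SimpleGraph.mem_neighborSet,
            Set.mem_empty_iff_false, iff_false, not_and]
          rintro hx rfl
          exact h hx
        rw [this, Set.ncard_empty]
    have hU' : (G'.neighborSet (σ v) ∩ {σ u}).ncard = if G'.Adj (σ v) (σ u) then 1 else 0 := by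
      by_cases h : G'.Adj (σ v) (σ u)
      · rw [if_pos h]
        have : G'.neighborSet (σ v) ∩ {σ u} = {σ u} := by
          ext x
          simp only [Set.mem_inter_iff, Set.mem_singleton_iff, SimpleGraph.mem_neighborSet]
          exact ⟨fun hx => hx.2, fun hx => ⟨hx ▸ h, hx⟩⟩
        rw [this, Set.ncard_singleton]
      · rw [if_neg h]
        have : G'.neighborSet (σ v) ∩ {σ u} = ∅ := by
          ext x
          simp only [Set.mem_inter_iff, Set.mem_singleton_iff, SimpleGraph.mem_neighborSet,
            Set.mem_empty_iff_false, iff_false, not_and]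
          rintro hx rfl
          exact h hx
        rw [this, Set.ncard_empty]
    by_cases h1 : G.Adj v u <;> by_cases h2 : G'.Adj (σ v) (σ u)
    · exact iff_of_true h1 h2
    · exfalso
      rw [if_pos h1] at hU
      rw [if_neg h2] at hU'
      omega
    · exfalso
      rw [if_neg h1] at hU
      rw [if_pos h2] at hU'
      omega
    · exact iff_of_false h1 h2
  -- main adjacency lemma for the final map
  have hmem : ∀ x : V, x ≠ v → x ∈ ({v}ᶜ : Set V) := fun x hx => by simpa using hx
  have hmainadj : ∀ (y : V) (h : y ≠ v),
      G'.Adj (σ v) ((ψ ⟨y, hmem y h⟩ : _) : W) ↔ G.Adj v y := by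
    intro y h
    by_cases hyu : y = u
    · subst hyu
      rw [hψu (hmem y h)]
      exact hvuedge.symm
    · have hyS : y ∈ S := by
        rw [hS]
        simp only [Set.mem_compl_iff, Set.mem_insert_iff, Set.mem_singleton_iff]
        push_neg
        exact ⟨h, hyu⟩
      have hval : ((ψ ⟨y, hmem y h⟩ : _) : W) = ((eψ ⟨y, hyS⟩ : _) : W) := rfl
      rw [hval]
      exact hadjψ ⟨y, hyS⟩
  -- build the final isomorphism
  let f : V → W := fun x => if h : x = v then σ v else ((ψ ⟨x, hmem x h⟩ : _) : W)
  have hfne : ∀ (x : V) (h : x ≠ v), ((ψ ⟨x, hmem x h⟩ : _) : W) ≠ σ v := by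
    intro x h hc
    have h2 := (ψ ⟨x, hmem x h⟩).2
    rw [hc] at h2
    simp at h2
  have hbij : Function.Bijective f := by
    constructor
    · intro a b hab
      by_cases ha : a = v <;> by_cases hb : b = v
      · rw [ha, hb]
      · exfalso
        simp only [f, dif_pos ha, dif_neg hb] at hab
        exact hfne b hb hab.symm
      · exfalso
        simp only [f, dif_neg ha, dif_pos hb] at hab
        exact hfne a ha hab
      · simp only [f, dif_neg ha, dif_neg hb] at hab
        have := ψ.toEquiv.injective (Subtype.ext hab)
        simpa using congrArg Subtype.val this
    · intro w
      by_cases hw : w = σ v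
      · exact ⟨v, by simp [f, hw]⟩
      · have hwm : w ∈ ({σ v}ᶜ : Set W) := by simpa using hw
        set t := ψ.symm ⟨w, hwm⟩ with htdef
        have htv : t.1 ≠ v := by
          intro hc
          have h6 := t.2
          rw [hc] at h6
          simp at h6
        refine ⟨t.1, ?_⟩
        simp only [f, dif_neg htv]
        have h5 : (⟨t.1, hmem t.1 htv⟩ : ↥({v}ᶜ : Set V)) = t := Subtype.ext rfl
        rw [h5, htdef, ψ.apply_symm_apply]
  refine ⟨⟨Equiv.ofBijective f hbij, ?_⟩⟩
  intro a b
  simp only [Equiv.ofBijective_apply]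
  by_cases ha : a = v <;> by_cases hb : b = v
  · subst ha; subst hb
    simp only [f, dif_pos rfl]
    simp [G.irrefl, G'.irrefl]
  · subst ha
    simp only [f, dif_pos rfl, dif_neg hb]
    constructor
    · intro h; exact (hmainadj b hb).1 h
    · intro h; exact (hmainadj b hb).2 h
  · subst hb
    simp only [f, dif_pos rfl, dif_neg ha]
    rw [G'.adj_comm, G.adj_comm]
    constructor
    · intro h; exact (hmainadj a ha).1 h
    · intro h; exact (hmainadj a ha).2 h
  · simp only [f, dif_neg ha, dif_neg hb]
    have := ψ.map_rel_iff (a := ⟨a, hmem a ha⟩) (b := ⟨b, hmem b hb⟩)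
    simpa using this
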